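/- Let n ≥ 2 and N = 2^n. The periodic state Ψ^n_{1,1} (shift l = 1, period r = 1), whose amplitude is 1/√(N−1) at every x with 1 ≤ x < N and 0 at x = 0, satisfies Ψ^n_{1,1} = (√N/√(N−1)) |+⟩^{⊗n} − (1/√(N−1)) |0⟩^{⊗n} and is SLOCC-equivalent to GHZ_n. -/

import Mathlib

open scoped BigOperators

noncomputable section

/-- `bit n i x` is the i-th binary digit of `x`, counted from the most significant. -/
def bit (n : ℕ) (i : Fin n) (x : Fin (2^n)) : Fin 2 :=
  ⟨((x : ℕ) / 2^(n - 1 - (i : ℕ))) % 2, Nat.mod_lt _ (by norm_num)⟩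

/-- An n-qubit state is separable if its amplitudes factor as a product over the qubits. -/
def Separable (n : ℕ) (ψ : Fin (2^n) → ℂ) : Prop :=
  ∃ v : Fin n → Fin 2 → ℂ, ∀ x, ψ x = ∏ i, v i (bit n i x)

/-- The periodic state with shift `l` and period `r`:
amplitude `1/√A` at `x = l + i·r` for `0 ≤ i < A`, with `A = ⌈(2^n - l)/r⌉`. -/
def periodicState (n l r : ℕ) : Fin (2^n) → ℂ := fun x =>
  if ∃ i < (2^n - l + r - 1) / r, (x : ℕ) = l + i * r
  then (1 : ℂ) / Real.sqrt (((2^n - l + r - 1) / r : ℕ)) else 0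

/-- Quantum Fourier transform of an n-qubit state. -/
def QFT (n : ℕ) (ψ : Fin (2^n) → ℂ) : Fin (2^n) → ℂ := fun y =>
  (1 / (Real.sqrt (2^n) : ℝ) : ℂ) * ∑ x : Fin (2^n),
    Complex.exp (2 * Real.pi * Complex.I * (x : ℕ) * (y : ℕ) / ((2^n : ℕ) : ℂ)) * ψ x

/-- The generalized GHZ state. -/
def GHZ (n : ℕ) : Fin (2^n) → ℂ := fun x =>
  if (x : ℕ) = 0 ∨ (x : ℕ) = 2^n - 1 then (1 : ℂ) / Real.sqrt 2 else 0

/-- SLOCC equivalence of two n-qubit states. -/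
def SLOCCEquiv (n : ℕ) (ψ φ : Fin (2^n) → ℂ) : Prop :=
  ∃ (g : Fin n → Matrix (Fin 2) (Fin 2) ℂ) (c : ℂ),
    c ≠ 0 ∧ (∀ i, IsUnit (g i)) ∧
    ∀ x, φ x = c * ∑ y : Fin (2^n), (∏ i, g i (bit n i x) (bit n i y)) * ψ y



lemma fin_two_cases (b : Fin 2) : b = 0 ∨ b = 1 := by omega

lemma bit_eq_symm {n : ℕ} (x : Fin (2^n)) (i : Fin n) :
    bit n i x = finFunctionFinEquiv.symm x i.rev := by
  apply Fin.ext
  simp only [bit, finFunctionFinEquiv, Equiv.ofRightInverseOfCardLE, Equiv.coe_fn_symm_mk,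
    Fin.val_rev]
  rw [show n - 1 - (i : ℕ) = n - ((i : ℕ) + 1) from by omega]

lemma bit_apply_equiv {n : ℕ} (f : Fin n → Fin 2) (i : Fin n) :
    bit n i (finFunctionFinEquiv f) = f i.rev := by
  rw [bit_eq_symm, Equiv.symm_apply_apply]

lemma bits_const_iff {n : ℕ} (x : Fin (2^n)) (b : Fin 2) :
    (∀ i, bit n i x = b) ↔ x = finFunctionFinEquiv (fun _ => b) := by
  constructor
  · intro h
    rw [← Equiv.symm_apply_eq]
    funext j
    have := h j.rev
    rwa [bit_eq_symm, Fin.rev_rev] at this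
  · intro h i
    rw [h, bit_apply_equiv]

lemma sum_two_pow (n : ℕ) : ∑ i ∈ Finset.range n, 2^i = 2^n - 1 := by
  induction n with
  | zero => simp
  | succ n ih =>
    rw [Finset.sum_range_succ, ih]
    have := Nat.one_le_two_pow (n := n)
    rw [pow_succ]
    omega

lemma bits_zero_iff {n : ℕ} (x : Fin (2^n)) : (∀ i, bit n i x = 0) ↔ (x : ℕ) = 0 := by
  rw [bits_const_iff]
  constructor
  · intro h; rw [h]; simp [finFunctionFinEquiv_apply]
  · intro h
    apply Fin.ext
    rw [h]
    simp [finFunctionFinEquiv_apply]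

lemma bits_one_iff {n : ℕ} (x : Fin (2^n)) : (∀ i, bit n i x = 1) ↔ (x : ℕ) = 2^n - 1 := by
  rw [bits_const_iff]
  have hval : ((finFunctionFinEquiv (fun _ => (1 : Fin 2)) : Fin (2^n)) : ℕ) = 2^n - 1 := by
    rw [finFunctionFinEquiv_apply]
    simp only [Fin.val_one, one_mul]
    rw [Fin.sum_univ_eq_sum_range (fun i => 2^i), sum_two_pow]
  constructor
  · intro h; rw [h]; exact hval
  · intro h
    apply Fin.ext
    rw [h, hval]

lemma sum_prod_bits {n : ℕ} (M : Fin n → Fin 2 → Fin 2 → ℂ) (b : Fin n → Fin 2) :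
    (∑ y : Fin (2^n), ∏ i, M i (b i) (bit n i y)) =
      ∏ i, (M i (b i) 0 + M i (b i) 1) := by
  rw [← finFunctionFinEquiv.sum_comp (fun y : Fin (2^n) => ∏ i, M i (b i) (bit n i y))]
  simp_rw [bit_apply_equiv]
  have hprod : ∀ f : Fin n → Fin 2,
      (∏ i, M i (b i) (f i.rev)) = ∏ i, M i.rev (b i.rev) (f i) := by
    intro f
    rw [← Equiv.prod_comp Fin.revPerm (fun i => M i.rev (b i.rev) (f i))]
    simp [Fin.rev_rev]
  simp_rw [hprod]
  calc (∑ f : Fin n → Fin 2, ∏ i : Fin n, M i.rev (b i.rev) (f i))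
      = ∏ i : Fin n, ∑ j : Fin 2, M i.rev (b i.rev) j :=
        (Fintype.prod_sum (fun (i : Fin n) (j : Fin 2) => M i.rev (b i.rev) j)).symm
    _ = ∏ i : Fin n, ∑ j : Fin 2, M i (b i) j :=
        Equiv.prod_comp Fin.revPerm (fun i => ∑ j : Fin 2, M i (b i) j)
    _ = ∏ i, (M i (b i) 0 + M i (b i) 1) := by
        simp [Fin.sum_univ_two]

lemma periodic_eq {n : ℕ} (x : Fin (2^n)) :
    periodicState n 1 1 x =
      if (x : ℕ) = 0 then 0 else (1 : ℂ) / Real.sqrt ((2^n - 1 : ℕ)) := by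
  have hx := x.isLt
  have h1 : (1:ℕ) ≤ 2^n := Nat.one_le_two_pow
  unfold periodicState
  simp only [mul_one, Nat.div_one, Nat.add_sub_cancel]
  by_cases h0 : (x : ℕ) = 0
  · rw [if_neg, if_pos h0]
    push_neg
    intro i hi
    omega
  · rw [if_pos ⟨(x : ℕ) - 1, by omega, by omega⟩, if_neg h0]

/-- `Ψ^n_{1,1} = (√N/√(N−1))|+⟩^{⊗n} − (1/√(N−1))|0⟩^{⊗n}` and it is
SLOCC-equivalent to `GHZ_n`. -/
theorem stmt_6 (n : ℕ) (hn : 2 ≤ n) :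
    (∀ x : Fin (2^n), periodicState n 1 1 x =
      ((Real.sqrt (2^n) / Real.sqrt (2^n - 1) : ℝ) : ℂ) * ((1 : ℂ) / Real.sqrt (2^n))
        - ((1 / Real.sqrt (2^n - 1) : ℝ) : ℂ) * (if (x : ℕ) = 0 then 1 else 0)) ∧
    SLOCCEquiv n (periodicState n 1 1) (GHZ n) := by
  have h4 : (4:ℕ) ≤ 2^n := by
    calc (4:ℕ) = 2^2 := by norm_num
    _ ≤ 2^n := Nat.pow_le_pow_right (by norm_num) hn
  have hcast : ((2^n - 1 : ℕ) : ℝ) = (2:ℝ)^n - 1 := by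
    have : (1:ℕ) ≤ 2^n := by omega
    push_cast [this]
    ring
  have hbpos : 0 < Real.sqrt ((2^n - 1 : ℕ)) := by
    apply Real.sqrt_pos.2
    rw [hcast]
    have : (4:ℝ) ≤ (2:ℝ)^n := by exact_mod_cast h4
    linarith
  have hb0 : (Real.sqrt ((2^n - 1 : ℕ)) : ℂ) ≠ 0 := by
    exact_mod_cast Complex.ofReal_ne_zero.2 hbpos.ne'
  have hapos : 0 < Real.sqrt ((2:ℝ)^n) := Real.sqrt_pos.2 (by positivity)
  constructor
  · intro x
    rw [periodic_eq]
    have hkey : ((Real.sqrt (2^n) / Real.sqrt (2^n - 1) : ℝ) : ℂ) * ((1 : ℂ) / Real.sqrt (2^n))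
        = (1 : ℂ) / Real.sqrt ((2^n - 1 : ℕ)) := by
      have hA' : ((Real.sqrt ((2:ℝ)^n) : ℝ) : ℂ) ≠ 0 := Complex.ofReal_ne_zero.2 hapos.ne'
      have hB' : ((Real.sqrt ((2:ℝ)^n - 1) : ℝ) : ℂ) ≠ 0 := by
        rw [← hcast]; exact hb0
      rw [hcast]
      push_cast
      field_simp
    rw [hkey]
    by_cases h0 : (x : ℕ) = 0
    · rw [if_pos h0, if_pos h0, mul_one, hcast]
      push_cast
      ring
    · rw [if_neg h0, if_neg h0, mul_zero, sub_zero]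
  · -- SLOCC equivalence
    set t : ℂ := Complex.exp (Real.pi * Complex.I / n) with ht_def
    have ht : t ≠ 0 := Complex.exp_ne_zero _
    have htn : t ^ n = -1 := by
      rw [ht_def, ← Complex.exp_nat_mul]
      have hn0 : (n : ℂ) ≠ 0 := Nat.cast_ne_zero.2 (by omega)
      rw [show (n : ℂ) * (↑Real.pi * Complex.I / ↑n) = ↑Real.pi * Complex.I by field_simp]
      exact Complex.exp_pi_mul_I
    refine ⟨fun _ => !![0, 1; t, -t],
      (Real.sqrt ((2^n - 1 : ℕ)) : ℂ) / (Real.sqrt 2 : ℂ), ?_, ?_, ?_⟩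
    · apply div_ne_zero hb0
      exact_mod_cast Complex.ofReal_ne_zero.2 (Real.sqrt_pos.2 (by norm_num)).ne'
    · intro i
      rw [Matrix.isUnit_iff_isUnit_det, Matrix.det_fin_two_of]
      simp only [zero_mul, one_mul, zero_sub, isUnit_iff_ne_zero, neg_ne_zero]
      exact ht
    · intro x
      haveI : NeZero (2^n) := ⟨by positivity⟩
      set a : ℂ := (1 : ℂ) / Real.sqrt ((2^n - 1 : ℕ)) with ha_def
      set c : ℂ := (Real.sqrt ((2^n - 1 : ℕ)) : ℂ) / (Real.sqrt 2 : ℂ) with hc_def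
      have hca : c * a = 1 / (Real.sqrt 2 : ℂ) := by
        rw [hc_def, ha_def]
        have h2 : ((Real.sqrt 2 : ℝ) : ℂ) ≠ 0 :=
          Complex.ofReal_ne_zero.2 (Real.sqrt_pos.2 (by norm_num)).ne'
        field_simp
      set b : Fin n → Fin 2 := fun i => bit n i x with hb_def
      set M : Fin 2 → Fin 2 → ℂ := fun r s => !![0, 1; t, -t] r s with hM_def
      have hM00 : M 0 0 = 0 := by simp [hM_def]
      have hM01 : M 0 1 = 1 := by simp [hM_def]
      have hM10 : M 1 0 = t := by simp [hM_def]
      have hM11 : M 1 1 = -t := by simp [hM_def]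
      -- rewrite ψ
      have hsum : (∑ y : Fin (2^n), (∏ i, M (b i) (bit n i y)) * periodicState n 1 1 y)
          = a * (∑ y : Fin (2^n), ∏ i, M (b i) (bit n i y))
            - (∏ i, M (b i) (bit n i (0 : Fin (2^n)))) * a := by
        have : ∀ y : Fin (2^n), (∏ i, M (b i) (bit n i y)) * periodicState n 1 1 y
            = a * (∏ i, M (b i) (bit n i y))
              - (if y = 0 then (∏ i, M (b i) (bit n i y)) * a else 0) := by
          intro y
          rw [periodic_eq]
          by_cases h0 : (y : ℕ) = 0
          · have hy0 : y = 0 := by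
              apply Fin.ext; simpa using h0
            rw [if_pos h0, if_pos hy0]
            ring
          · have hy0 : y ≠ 0 := by
              intro h; apply h0; rw [h]; simp
            rw [if_neg h0, if_neg hy0, ← ha_def]
            ring
        have step := Finset.sum_congr rfl (fun y (_ : y ∈ Finset.univ) => this y)
        rw [step]
        rw [Finset.sum_sub_distrib]
        rw [← Finset.mul_sum]
        rw [Finset.sum_ite_eq' Finset.univ (0 : Fin (2^n))
          (fun y => (∏ i, M (b i) (bit n i y)) * a)]
        simp
      have hS : (∑ y : Fin (2^n), ∏ i, M (b i) (bit n i y))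
          = if (x : ℕ) = 0 then 1 else 0 := by
        rw [sum_prod_bits (fun _ r s => M r s) b]
        have : ∀ i : Fin n, M (b i) 0 + M (b i) 1 = if b i = 0 then 1 else 0 := by
          intro i
          rcases fin_two_cases (b i) with h | h <;> rw [h]
          · rw [hM00, hM01, if_pos rfl]; ring
          · rw [hM10, hM11, if_neg (by simp)]; ring
        simp_rw [this]
        rw [Fintype.prod_boole]
        by_cases hx0 : (x : ℕ) = 0
        · rw [if_pos ((bits_zero_iff x).2 hx0), if_pos hx0]
        · rw [if_neg (fun h => hx0 ((bits_zero_iff x).1 h)), if_neg hx0]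
      have hbit0 : ∀ i : Fin n, bit n i (0 : Fin (2^n)) = 0 := by
        intro i
        apply Fin.ext
        simp [bit]
      have hP : (∏ i, M (b i) (bit n i (0 : Fin (2^n))))
          = if (x : ℕ) = 2^n - 1 then -1 else 0 := by
        simp_rw [hbit0]
        by_cases h1 : (x : ℕ) = 2^n - 1
        · have hall : ∀ i, b i = 1 := (bits_one_iff x).2 h1
          rw [if_pos h1]
          calc (∏ i : Fin n, M (b i) 0) = ∏ _i : Fin n, t := by
                apply Finset.prod_congr rfl
                intro i _
                rw [hall i, hM10]
          _ = t ^ n := by rw [Finset.prod_const, Finset.card_univ, Fintype.card_fin]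
          _ = -1 := htn
        · rw [if_neg h1]
          have : ∃ i, b i ≠ 1 := by
            by_contra hc
            push_neg at hc
            exact h1 ((bits_one_iff x).1 hc)
          obtain ⟨i, hi⟩ := this
          apply Finset.prod_eq_zero (Finset.mem_univ i)
          rcases fin_two_cases (b i) with h | h
          · rw [h, hM00]
          · exact absurd h hi
      have hMeq : (∑ y : Fin (2^n), (∏ i, (fun (_ : Fin n) => !![0, 1; t, -t]) i (bit n i x) (bit n i y)) * periodicState n 1 1 y)
          = a * (if (x : ℕ) = 0 then 1 else 0) - (if (x : ℕ) = 2^n - 1 then -1 else 0) * a :=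
        hsum.trans (by rw [hS, hP])
      refine Eq.trans ?_ (congrArg (fun z => c * z) hMeq.symm)
      show GHZ n x = c * ((a * if (x : ℕ) = 0 then 1 else 0)
        - (if (x : ℕ) = 2^n - 1 then -1 else 0) * a)
      rw [GHZ]
      by_cases h0 : (x : ℕ) = 0
      · have h1 : (x : ℕ) ≠ 2^n - 1 := by omega
        rw [if_pos h0, if_neg h1, if_pos (Or.inl h0)]
        rw [mul_one, zero_mul, sub_zero, hca]
      · by_cases h1 : (x : ℕ) = 2^n - 1
        · rw [if_neg h0, if_pos h1, if_pos (Or.inr h1)]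
          rw [mul_zero, zero_sub, neg_mul, one_mul, neg_neg, hca]
        · rw [if_neg h0, if_neg h1, if_neg (by tauto)]
          simp
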